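/- Shuffle product preserves admissibility and multiplicativity for 2-labeled posets (Yamamoto, as used in Theorem 3.2): let X and Y be finite posets with labeling maps δ_X : X → {0,1}, δ_Y : Y → {0,1} that are admissible (label 1 on all minimal elements, label 0 on all maximal elements), and for an admissible labeled poset (Z, δ) define I(Z) = ∫_{Δ(Z)} ∏_{z∈Z} ω_{δ(z)}(t_z), where Δ(Z) = {(t_z) ∈ [0,1]^Z : t_z < t_w whenever z < w}, ω₀(t) = dt/t, ω₁(t) = dt/(1−t). Then the disjoint union X ⊔ Y with the induced order (no relations between X and Y) and labeling is admissible, the integral I(X ⊔ Y) converges, and I(X ⊔ Y) = I(X)·I(Y). -/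

import Mathlib

open MeasureTheory

/-- The one-forms `ω₀(t) = dt/t`, `ω₁(t) = dt/(1-t)` (as density functions), indexed by a
label in `Bool` (`false ↔ 0`, `true ↔ 1`). -/
noncomputable def omegaFn (b : Bool) (t : ℝ) : ℝ := if b then (1 - t)⁻¹ else t⁻¹

/-- `Δ(Z) = {(t_z) ∈ [0,1]^Z | t_z < t_w whenever z < w}`. -/
def posetSimplex (Z : Type*) [PartialOrder Z] : Set (Z → ℝ) :=
  {t | (∀ z, 0 ≤ t z ∧ t z ≤ 1) ∧ ∀ z w : Z, z < w → t z < t w}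

/-- A labeling is admissible if minimal elements are labeled `1` and maximal elements `0`. -/
def Admissible {Z : Type*} [PartialOrder Z] (δ : Z → Bool) : Prop :=
  (∀ z, IsMin z → δ z = true) ∧ ∀ z, IsMax z → δ z = false

/-- `I(Z) = ∫_{Δ(Z)} ∏_{z ∈ Z} ω_{δ(z)}(t_z)`. -/
noncomputable def posetIntegral (Z : Type*) [Fintype Z] [PartialOrder Z] (δ : Z → Bool) : ℝ :=
  ∫ t in posetSimplex Z, ∏ z, omegaFn (δ z) (t z)

section Aux
open Real Set Finset

variable {Z : Type*} [Fintype Z] [PartialOrder Z]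

lemma measurable_omegaProd (δ : Z → Bool) :
    Measurable fun t : Z → ℝ => ∏ z, omegaFn (δ z) (t z) := by
  apply Finset.measurable_prod
  intro z _
  cases h : δ z <;> simp only [omegaFn, h, Bool.false_eq_true, if_false, if_true]
  · exact (measurable_pi_apply z).inv
  · exact (measurable_const.sub (measurable_pi_apply z)).inv

lemma measurableSet_posetSimplex : MeasurableSet (posetSimplex Z) := by
  have : posetSimplex Z =
      (⋂ z : Z, {t : Z → ℝ | 0 ≤ t z} ∩ {t | t z ≤ 1}) ∩
        ⋂ (z : Z) (w : Z) (_ : z < w), {t : Z → ℝ | t z < t w} := by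
    ext t
    simp only [posetSimplex, Set.mem_setOf_eq, Set.mem_inter_iff, Set.mem_iInter]
  rw [this]
  refine MeasurableSet.inter (MeasurableSet.iInter fun z => ?_)
    (MeasurableSet.iInter fun z => MeasurableSet.iInter fun w => MeasurableSet.iInter fun _ => ?_)
  · exact (measurableSet_le measurable_const (measurable_pi_apply z)).inter
      (measurableSet_le (measurable_pi_apply z) measurable_const)
  · exact measurableSet_lt (measurable_pi_apply z) (measurable_pi_apply w)

/-- key log-sum inequality turned into a product inequality -/
lemma aux_prod_le {u : Z → ℝ} (hu : ∀ z, 0 < u z) (hu1 : ∀ z, u z ≤ 1)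
    (p : Z → Prop) [DecidablePred p]
    (zs : Z) (hzs : ∀ z, u zs ≤ u z) (hpzs : ¬ p zs) :
    ∏ z ∈ Finset.univ.filter p, (u z)⁻¹
      ≤ ∏ z, (u z) ^ (-(1 - ((Fintype.card Z : ℝ))⁻¹)) := by
  have hne : Nonempty Z := ⟨zs⟩
  set n : ℕ := Fintype.card Z with hn
  have hn0 : 0 < (n : ℝ) := by exact_mod_cast Fintype.card_pos
  set a : ℝ := 1 - (n : ℝ)⁻¹ with ha
  have ha0 : 0 ≤ a := by
    have : (n : ℝ)⁻¹ ≤ 1 := by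
      rw [inv_le_one_iff₀]; right; exact_mod_cast Fintype.card_pos
    simpa [ha] using this
  -- logs
  set L : Z → ℝ := fun z => -Real.log (u z) with hL
  have hLnn : ∀ z, 0 ≤ L z := fun z => by
    simpa [hL] using Real.log_nonpos (hu z).le (hu1 z)
  have hLmax : ∀ z, L z ≤ L zs := fun z => by
    simp only [hL, neg_le_neg_iff]
    exact Real.log_le_log (hu zs) (hzs z)
  set S : ℝ := ∑ z, L z with hS
  have hS_le : S ≤ n * L zs := by
    have := Finset.sum_le_card_nsmul Finset.univ L (L zs) (fun z _ => hLmax z)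
    simpa [hS, Finset.card_univ, nsmul_eq_mul] using this
  have hkey : ∑ z ∈ Finset.univ.filter p, L z ≤ a * S := by
    have h1 : (n : ℝ)⁻¹ * S ≤ L zs := by
      rw [inv_mul_le_iff₀ hn0]
      linarith [hS_le, mul_comm (n : ℝ) (L zs)]
    have hzs_le : L zs ≤ ∑ z ∈ Finset.univ.filter (fun z => ¬ p z), L z :=
      Finset.single_le_sum (fun z _ => hLnn z)
        (Finset.mem_filter.2 ⟨Finset.mem_univ _, hpzs⟩)
    have hsplit : ∑ z ∈ Finset.univ.filter p, L z
        + ∑ z ∈ Finset.univ.filter (fun z => ¬ p z), L z = S := by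
      rw [hS]
      exact Finset.sum_filter_add_sum_filter_not _ _ _
    set A := ∑ z ∈ Finset.univ.filter p, L z
    set B := ∑ z ∈ Finset.univ.filter (fun z => ¬ p z), L z
    have haS : a * S = S - (n : ℝ)⁻¹ * S := by ring
    rw [haS, eq_sub_of_add_eq hsplit]
    exact sub_le_sub_left (h1.trans hzs_le) S
  -- exponentiate
  have hlpos : 0 < ∏ z ∈ Finset.univ.filter p, (u z)⁻¹ :=
    Finset.prod_pos fun z _ => inv_pos.2 (hu z)
  have hrpos : 0 < ∏ z : Z, (u z) ^ (-a) :=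
    Finset.prod_pos fun z _ => Real.rpow_pos_of_pos (hu z) _
  rw [← Real.log_le_log_iff hlpos hrpos]
  rw [Real.log_prod (fun z _ => (inv_pos.2 (hu z)).ne'),
    Real.log_prod (fun z _ => (Real.rpow_pos_of_pos (hu z) _).ne')]
  calc ∑ z ∈ Finset.univ.filter p, Real.log (u z)⁻¹
      = ∑ z ∈ Finset.univ.filter p, L z := by
        refine Finset.sum_congr rfl fun z _ => ?_
        simp [hL, Real.log_inv]
    _ ≤ a * S := hkey
    _ = ∑ z : Z, Real.log ((u z) ^ (-a)) := by
        rw [hS, Finset.mul_sum]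
        refine (Finset.sum_congr rfl fun z _ => ?_).symm
        rw [Real.log_rpow (hu z)]
        simp only [hL]
        ring

end Aux

section Aux2
open Real Set Finset

variable {Z : Type*} [Fintype Z] [PartialOrder Z]

lemma omegaFn_nonneg {b : Bool} {t : ℝ} (h0 : 0 ≤ t) (h1 : t ≤ 1) : 0 ≤ omegaFn b t := by
  cases b <;> simp only [omegaFn, if_true, if_false, Bool.false_eq_true]
  · exact inv_nonneg.2 h0
  · exact inv_nonneg.2 (by linarith)

lemma prod_omega_le (δ : Z → Bool) (h : Admissible δ) [Nonempty Z] {t : Z → ℝ}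
    (htΔ : t ∈ posetSimplex Z) (ht : ∀ z, t z ∈ Set.Ioo (0:ℝ) 1) :
    ∏ z, omegaFn (δ z) (t z)
      ≤ ∏ z, ((t z) ^ (-(1 - ((Fintype.card Z : ℝ))⁻¹)) *
          (1 - t z) ^ (-(1 - ((Fintype.card Z : ℝ))⁻¹))) := by
  classical
  set a := 1 - ((Fintype.card Z : ℝ))⁻¹ with ha
  obtain ⟨zm, -, hzm⟩ := Finset.exists_min_image Finset.univ t
    ⟨Classical.arbitrary Z, Finset.mem_univ _⟩
  obtain ⟨zM, -, hzM⟩ := Finset.exists_max_image Finset.univ t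
    ⟨Classical.arbitrary Z, Finset.mem_univ _⟩
  have hmin : IsMin zm := by
    intro w hw
    rcases eq_or_lt_of_le hw with rfl | hlt
    · exact le_rfl
    · exact absurd (htΔ.2 _ _ hlt) (not_lt.2 (hzm w (Finset.mem_univ w)))
  have hmax : IsMax zM := by
    intro w hw
    rcases eq_or_lt_of_le hw with rfl | hlt
    · exact le_rfl
    · exact absurd (htΔ.2 _ _ hlt) (not_lt.2 (hzM w (Finset.mem_univ w)))
  have hδm : δ zm = true := h.1 zm hmin
  have hδM : δ zM = false := h.2 zM hmax
  have hA : ∏ z ∈ Finset.univ.filter (fun z => δ z = false), (t z)⁻¹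
      ≤ ∏ z, (t z) ^ (-a) :=
    aux_prod_le (fun z => (ht z).1) (fun z => (ht z).2.le) _ zm
      (fun z => hzm z (Finset.mem_univ z)) (by simp [hδm])
  have hB : ∏ z ∈ Finset.univ.filter (fun z => δ z = true), (1 - t z)⁻¹
      ≤ ∏ z, (1 - t z) ^ (-a) :=
    aux_prod_le (u := fun z => 1 - t z)
      (fun z => by show (0:ℝ) < 1 - t z; linarith [(ht z).2])
      (fun z => by show (1:ℝ) - t z ≤ 1; linarith [(ht z).1]) _ zM
      (fun z => by show (1:ℝ) - t zM ≤ 1 - t z; linarith [hzM z (Finset.mem_univ z)])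
      (by simp [hδM])
  have hsplit : ∏ z, omegaFn (δ z) (t z)
      = (∏ z ∈ Finset.univ.filter (fun z => δ z = false), (t z)⁻¹) *
        ∏ z ∈ Finset.univ.filter (fun z => δ z = true), (1 - t z)⁻¹ := by
    rw [← Finset.prod_filter_mul_prod_filter_not Finset.univ (fun z => δ z = false)
      (fun z => omegaFn (δ z) (t z))]
    congr 1
    · refine Finset.prod_congr rfl fun z hz => ?_
      have := (Finset.mem_filter.1 hz).2
      simp [omegaFn, this]
    · refine Finset.prod_congr (Finset.filter_congr fun z _ => by simp) fun z hz => ?_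
      have := (Finset.mem_filter.1 hz).2
      simp [omegaFn, this]
  rw [hsplit, Finset.prod_mul_distrib]
  exact mul_le_mul hA hB
    (Finset.prod_nonneg fun z _ => inv_nonneg.2 (by linarith [(ht z).2]))
    (Finset.prod_nonneg fun z _ => Real.rpow_nonneg (ht z).1.le _)

lemma integrableOn_rpow_mul {e : ℝ} (he : -1 < e) (he0 : e ≤ 0) :
    IntegrableOn (fun s : ℝ => s ^ e * (1 - s) ^ e) (Set.Ioo (0:ℝ) 1) volume := by
  have f1 : IntegrableOn (fun s : ℝ => s ^ e) (Set.Ioo (0:ℝ) 1) volume := by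
    have h := intervalIntegral.intervalIntegrable_rpow' (a := 0) (b := 1) he
    exact (intervalIntegrable_iff_integrableOn_Ioo_of_le (by norm_num)).1 h
  have f2 : IntegrableOn (fun s : ℝ => (1 - s) ^ e) (Set.Ioo (0:ℝ) 1) volume := by
    have h := (intervalIntegral.intervalIntegrable_rpow' (a := 0) (b := 1) he).comp_sub_left 1
    simp only [sub_zero, sub_self] at h
    exact (intervalIntegrable_iff_integrableOn_Ioo_of_le (by norm_num)).1 h.symm
  set C : ℝ := (2:ℝ) ^ (-e) with hC
  have hC0 : 0 ≤ C := Real.rpow_nonneg (by norm_num) _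
  have hhalf : ((1:ℝ)/2) ^ e = C := by
    rw [hC, one_div, Real.inv_rpow (by norm_num), ← Real.rpow_neg (by norm_num)]
  refine Integrable.mono' (g := fun s => C * s ^ e + C * (1 - s) ^ e)
    ((f1.const_mul C).add (f2.const_mul C)) ?_ ?_
  · refine ContinuousOn.aestronglyMeasurable ?_ measurableSet_Ioo
    exact (continuousOn_id.rpow_const fun x hx => Or.inl (ne_of_gt hx.1)).mul
      ((continuous_const.sub continuous_id).continuousOn.rpow_const
        fun x hx => Or.inl (by simp only [Pi.sub_apply, id]; intro hc; rw [sub_eq_zero] at hc; linarith [hx.2]))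
  · rw [ae_restrict_iff' measurableSet_Ioo]
    filter_upwards with s hs
    have h0s : (0:ℝ) < s := hs.1
    have hs1 : s < 1 := hs.2
    have hn1 : 0 ≤ s ^ e := Real.rpow_nonneg h0s.le _
    have hn2 : 0 ≤ (1 - s) ^ e := Real.rpow_nonneg (by linarith) _
    rw [Real.norm_eq_abs, abs_of_nonneg (mul_nonneg hn1 hn2)]
    rcases le_total s (1/2) with hle | hle
    · have : (1 - s) ^ e ≤ C := by
        rw [← hhalf]
        exact Real.rpow_le_rpow_of_nonpos (by norm_num) (by linarith) he0
      nlinarith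
    · have : s ^ e ≤ C := by
        rw [← hhalf]
        exact Real.rpow_le_rpow_of_nonpos (by norm_num) hle he0
      nlinarith

theorem integrableOn_posetSimplex (δ : Z → Bool) (h : Admissible δ) :
    IntegrableOn (fun t : Z → ℝ => ∏ z, omegaFn (δ z) (t z)) (posetSimplex Z) volume := by
  classical
  cases isEmpty_or_nonempty Z with
  | inl hempty =>
      simp only [Finset.univ_eq_empty, Finset.prod_empty]
      have huniv : (volume : Measure (Z → ℝ)) Set.univ = 1 := by
        rw [volume_pi, Measure.pi_univ]
        simp
      refine integrableOn_const (ne_of_lt ?_)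
      calc volume (posetSimplex Z) ≤ volume Set.univ := measure_mono (Set.subset_univ _)
        _ < ⊤ := by rw [huniv]; exact ENNReal.one_lt_top
  | inr hne =>
      set e : ℝ := -(1 - ((Fintype.card Z : ℝ))⁻¹) with hedef
      have hcard : 0 < Fintype.card Z := Fintype.card_pos
      have hcard' : (0:ℝ) < (Fintype.card Z : ℝ) := by exact_mod_cast hcard
      have he1 : -1 < e := by
        have : 0 < ((Fintype.card Z : ℝ))⁻¹ := inv_pos.2 hcard'
        rw [hedef]; linarith
      have he0 : e ≤ 0 := by
        have : ((Fintype.card Z : ℝ))⁻¹ ≤ 1 := by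
          rw [inv_le_one_iff₀]; right; exact_mod_cast hcard
        rw [hedef]; linarith
      set H : ℝ → ℝ := (Set.Ioo (0:ℝ) 1).indicator (fun s => s ^ e * (1 - s) ^ e) with hHdef
      have hH : Integrable H volume :=
        (integrable_indicator_iff measurableSet_Ioo).2 (integrableOn_rpow_mul he1 he0)
      have hdom : Integrable (fun t : Z → ℝ => ∏ z, H (t z)) volume :=
        Integrable.fintype_prod (f := fun _ : Z => H) fun _ => hH
      refine Integrable.mono hdom.integrableOn
        ((measurable_omegaProd δ).aestronglyMeasurable) ?_
      have hae : ∀ᵐ t : Z → ℝ ∂(volume.restrict (posetSimplex Z)), ∀ z, t z ≠ 0 ∧ t z ≠ 1 := by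
        rw [MeasureTheory.ae_all_iff]
        intro z
        refine ae_restrict_of_ae ?_
        have h0 : ∀ᵐ t : Z → ℝ ∂volume, t z ≠ 0 := by
          rw [volume_pi]; exact Measure.ae_eval_ne _ z 0
        have h1 : ∀ᵐ t : Z → ℝ ∂volume, t z ≠ 1 := by
          rw [volume_pi]; exact Measure.ae_eval_ne _ z 1
        filter_upwards [h0, h1] with t ht0 ht1
        exact ⟨ht0, ht1⟩
      have hmem : ∀ᵐ t : Z → ℝ ∂(volume.restrict (posetSimplex Z)), t ∈ posetSimplex Z :=
        ae_restrict_mem measurableSet_posetSimplex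
      filter_upwards [hae, hmem] with t h01 htΔ
      have hio : ∀ z, t z ∈ Set.Ioo (0:ℝ) 1 := fun z =>
        ⟨lt_of_le_of_ne (htΔ.1 z).1 (Ne.symm (h01 z).1), lt_of_le_of_ne (htΔ.1 z).2 (h01 z).2⟩
      have hHt : ∀ z, H (t z) = (t z) ^ e * (1 - t z) ^ e := fun z =>
        Set.indicator_of_mem (hio z) _
      rw [Real.norm_eq_abs, Real.norm_eq_abs,
        abs_of_nonneg (Finset.prod_nonneg fun z _ => omegaFn_nonneg (htΔ.1 z).1 (htΔ.1 z).2),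
        abs_of_nonneg (Finset.prod_nonneg fun z _ => by
          rw [hHt z]
          exact mul_nonneg (Real.rpow_nonneg (hio z).1.le _)
            (Real.rpow_nonneg (by linarith [(hio z).2]) _))]
      calc ∏ z, omegaFn (δ z) (t z)
          ≤ ∏ z, ((t z) ^ e * (1 - t z) ^ e) := prod_omega_le δ h htΔ hio
        _ = ∏ z, H (t z) := Finset.prod_congr rfl fun z _ => (hHt z).symm

end Aux2

/-- Yamamoto: for admissible labeled finite posets `X`, `Y`, the disjoint union `X ⊕ Y`
(with no relations between the summands) is admissible, its associated integral converges,
and `I(X ⊔ Y) = I(X) · I(Y)`. -/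
theorem poset_shuffle_product (X Y : Type) [Fintype X] [Fintype Y]
    [PartialOrder X] [PartialOrder Y] (δX : X → Bool) (δY : Y → Bool)
    (hX : Admissible δX) (hY : Admissible δY) :
    Admissible (Sum.elim δX δY : X ⊕ Y → Bool)
    ∧ IntegrableOn (fun t : (X ⊕ Y) → ℝ => ∏ z, omegaFn (Sum.elim δX δY z) (t z))
        (posetSimplex (X ⊕ Y)) volume
    ∧ posetIntegral (X ⊕ Y) (Sum.elim δX δY) = posetIntegral X δX * posetIntegral Y δY := by
  classical
  have hadm : Admissible (Sum.elim δX δY : X ⊕ Y → Bool) := by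
    constructor
    · rintro (x | y) hz
      · simpa using hX.1 x fun w hw => Sum.inl_le_inl_iff.1 (hz (Sum.inl_le_inl_iff.2 hw))
      · simpa using hY.1 y fun w hw => Sum.inr_le_inr_iff.1 (hz (Sum.inr_le_inr_iff.2 hw))
    · rintro (x | y) hz
      · simpa using hX.2 x fun w hw => Sum.inl_le_inl_iff.1 (hz (Sum.inl_le_inl_iff.2 hw))
      · simpa using hY.2 y fun w hw => Sum.inr_le_inr_iff.1 (hz (Sum.inr_le_inr_iff.2 hw))
  refine ⟨hadm, integrableOn_posetSimplex _ hadm, ?_⟩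
  set e := MeasurableEquiv.sumPiEquivProdPi (fun _ : X ⊕ Y => ℝ) with hedef
  have happly : ∀ (t : (X ⊕ Y) → ℝ),
      e t = (fun x => t (Sum.inl x), fun y => t (Sum.inr y)) := fun t => rfl
  have hset : posetSimplex (X ⊕ Y) = e ⁻¹' (posetSimplex X ×ˢ posetSimplex Y) := by
    ext t
    simp only [Set.mem_preimage, Set.mem_prod, happly]
    constructor
    · intro htΔ
      exact ⟨⟨fun x => htΔ.1 (Sum.inl x), fun z w hzw => htΔ.2 _ _ (Sum.inl_lt_inl_iff.2 hzw)⟩,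
        ⟨fun y => htΔ.1 (Sum.inr y), fun z w hzw => htΔ.2 _ _ (Sum.inr_lt_inr_iff.2 hzw)⟩⟩
    · rintro ⟨⟨hX1, hX2⟩, hY1, hY2⟩
      refine ⟨fun z => ?_, fun z w hzw => ?_⟩
      · cases z with
        | inl x => exact hX1 x
        | inr y => exact hY1 y
      · rw [Sum.lt_def] at hzw
        cases hzw with
        | inl hh => exact hX2 _ _ hh
        | inr hh => exact hY2 _ _ hh
  have hmp : MeasurePreserving e (volume : Measure ((X ⊕ Y) → ℝ))
      ((volume : Measure (X → ℝ)).prod (volume : Measure (Y → ℝ))) := by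
    have h1 := volume_measurePreserving_sumPiEquivProdPi_symm (fun _ : X ⊕ Y => ℝ)
    have h2 := h1.symm (MeasurableEquiv.sumPiEquivProdPi (fun _ : X ⊕ Y => ℝ)).symm
    exact h2
  set G : ((X → ℝ) × (Y → ℝ)) → ℝ :=
    fun p => (∏ x, omegaFn (δX x) (p.1 x)) * ∏ y, omegaFn (δY y) (p.2 y) with hGdef
  have hGe : ∀ t : (X ⊕ Y) → ℝ, (∏ z, omegaFn (Sum.elim δX δY z) (t z)) = G (e t) := by
    intro t
    rw [hGdef, happly, Fintype.prod_sum_type]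
    simp
  calc posetIntegral (X ⊕ Y) (Sum.elim δX δY)
      = ∫ t in e ⁻¹' (posetSimplex X ×ˢ posetSimplex Y), G (e t) := by
        rw [posetIntegral, hset]
        exact integral_congr_ae (Filter.Eventually.of_forall fun t => hGe t)
    _ = ∫ p in posetSimplex X ×ˢ posetSimplex Y, G p
          ∂((volume : Measure (X → ℝ)).prod (volume : Measure (Y → ℝ))) :=
        hmp.setIntegral_preimage_emb (MeasurableEquiv.measurableEmbedding _) G _
    _ = posetIntegral X δX * posetIntegral Y δY := by
        rw [← Measure.prod_restrict, hGdef]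
        exact integral_prod_mul (μ := volume.restrict (posetSimplex X))
          (ν := volume.restrict (posetSimplex Y))
          (fun q : X → ℝ => ∏ x, omegaFn (δX x) (q x))
          (fun q : Y → ℝ => ∏ y, omegaFn (δY y) (q y))
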